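/- Let G be a finite simple graph that is weakly f-degenerate for a function f : V(G) → ℕ. If g : V(G) → ℕ is a function such that g(u) ≥ f(u) for all vertices u, then G is weakly g-degenerate. -/
import Mathlib


open scoped Classical

namespace WeakDeg

variable {V : Type*}

/-- `WeakDegenOn G S f` means: starting from the induced subgraph `G[S]` of `G` with value
function `f`, it is possible to remove all vertices by a sequence of legal applications of the
operations `Delete` and `DelSave`. `Delete(u)` removes `u` and decreases by one the value of
every remaining neighbor of `u`; it is legal if the resulting function is nonnegative on the
remaining vertices. `DelSave(u, w)` (for `w` a neighbor of `u` with `f w < f u`) removes `u` and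
decreases by one the value of every remaining neighbor of `u` except `w`; it is legal if
`f w < f u` and the resulting function is nonnegative on the remaining vertices. -/
inductive WeakDegenOn (G : SimpleGraph V) : Finset V → (V → ℤ) → Prop
  | empty (f : V → ℤ) : WeakDegenOn G ∅ f
  | delete (S : Finset V) (f : V → ℤ) (u : V) (hu : u ∈ S)
      (hleg : ∀ v ∈ S.erase u, 0 ≤ if G.Adj u v then f v - 1 else f v)
      (h : WeakDegenOn G (S.erase u) fun v => if G.Adj u v then f v - 1 else f v) :
      WeakDegenOn G S f
  | delSave (S : Finset V) (f : V → ℤ) (u w : V) (hu : u ∈ S) (hw : w ∈ S)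
      (hadj : G.Adj u w) (hlt : f w < f u)
      (hleg : ∀ v ∈ S.erase u, 0 ≤ if G.Adj u v ∧ v ≠ w then f v - 1 else f v)
      (h : WeakDegenOn G (S.erase u) fun v => if G.Adj u v ∧ v ≠ w then f v - 1 else f v) :
      WeakDegenOn G S f

/-- `G` is weakly `f`-degenerate, for `f : V → ℕ`. -/
def WeaklyDegenerateWith (G : SimpleGraph V) [Fintype V] (f : V → ℕ) : Prop :=
  WeakDegenOn G Finset.univ fun v => (f v : ℤ)

/-- `G` is weakly `d`-degenerate. -/
def WeaklyDegenerate (G : SimpleGraph V) [Fintype V] (d : ℕ) : Prop :=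
  WeaklyDegenerateWith G fun _ => d

/-- The weak degeneracy `wd(G)` of `G`: the least `d` such that `G` is weakly `d`-degenerate. -/
noncomputable def weakDegeneracy (G : SimpleGraph V) [Fintype V] : ℕ :=
  sInf {d : ℕ | WeaklyDegenerate G d}

/-- Weak degeneracy is monotone: if `G` is weakly `f`-degenerate and `g ≥ f` pointwise,
then `G` is weakly `g`-degenerate. -/
lemma WeakDegenOn.mono {G : SimpleGraph V} :
    ∀ {S : Finset V} {f : V → ℤ}, WeakDegenOn G S f →
      ∀ g : V → ℤ, (∀ v ∈ S, f v ≤ g v) → WeakDegenOn G S g := by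
  intro S f h
  induction h with
  | empty f => intro g _; exact .empty g
  | delete S f u hu hleg h ih =>
    intro g hg
    refine WeakDegenOn.delete S g u hu (fun v hv => ?_) (ih _ (fun v hv => ?_)) <;>
    · have h1 := hleg v hv
      have h2 := hg v (Finset.mem_of_mem_erase hv)
      dsimp only at *
      split_ifs at h1 ⊢ <;> linarith
  | delSave S f u w hu hw hadj hlt hleg h ih =>
    intro g hg
    have hwu : w ∈ S.erase u := Finset.mem_erase.2 ⟨hadj.ne', hw⟩
    have hfw : (0:ℤ) ≤ f w := by
      have := hleg w hwu; simpa using this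
    have hgu : f u ≤ g u := hg u hu
    have hgww : f w ≤ g w := hg w hw
    by_cases hgw : g w < g u
    · refine WeakDegenOn.delSave S g u w hu hw hadj hgw (fun v hv => ?_)
        (ih _ (fun v hv => ?_)) <;>
      · have h1 := hleg v hv
        have h2 := hg v (Finset.mem_of_mem_erase hv)
        dsimp only at *
        split_ifs at h1 ⊢ <;> linarith
    · push_neg at hgw
      refine WeakDegenOn.delete S g u hu (fun v hv => ?_) (ih _ (fun v hv => ?_)) <;>
      [skip; skip] <;>
      · have h1 := hleg v hv
        have h2 := hg v (Finset.mem_of_mem_erase hv)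
        dsimp only at *
        by_cases hvw : v = w
        · subst hvw
          simp only [ne_eq, not_true, and_false, if_false, if_pos hadj] at h1 ⊢
          linarith
        · simp only [ne_eq, hvw, not_false_iff, and_true] at h1 ⊢
          split_ifs at h1 ⊢ <;> linarith

theorem weaklyDegenerateWith_mono {V : Type*} [Fintype V] (G : SimpleGraph V) (f g : V → ℕ)
    (hf : WeaklyDegenerateWith G f) (hfg : ∀ u, f u ≤ g u) :
    WeaklyDegenerateWith G g := by
  exact hf.mono _ (fun v _ => by exact_mod_cast hfg v)

end WeakDeg
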